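/- arXiv:2102.12611 — 5 statements merged into one kernel-verified Lean document; each statement's English description precedes it below -/
import Mathlib

section
/- Let S be a finite nonempty set, let T ≥ 1, let X₀, X₁, …, X_T be distribution vectors on S, and let H₀, H₁, …, H_{T−1} be row-stochastic matrices on S. For 0 ≤ i ≤ t ≤ T define H_{i:t} = H_i H_{i+1} ⋯ H_{t−1} (with H_{i:i} the identity matrix), and for 1 ≤ i ≤ T define B_i = Σ_{t=1}^{i} X_t + Σ_{t=i+1}^{T} (H_{i:t})ᵀ X_i, and B₀ = Σ_{t=1}^{T} (H_{0:t})ᵀ X₀. Then for every 1 ≤ i ≤ T, B_i − B_{i−1} = Σ_{t=i}^{T} (H_{i:t})ᵀ (X_i − H_{i−1}ᵀ X_{i−1}). -/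
open Finset Matrix BigOperators

/-- The partial product `H_{i:t} = H i * H (i+1) * ⋯ * H (t-1)`, with `H_{i:i} = 1`. -/
def prodSlice {S : Type*} [Fintype S] [DecidableEq S]
    (H : ℕ → Matrix S S ℝ) (i t : ℕ) : Matrix S S ℝ :=
  ((List.range (t - i)).map (fun j => H (i + j))).prod

lemma prodSlice_self {S : Type*} [Fintype S] [DecidableEq S]
    (H : ℕ → Matrix S S ℝ) (i : ℕ) : prodSlice H i i = 1 := by
  simp [prodSlice]

lemma prodSlice_cons {S : Type*} [Fintype S] [DecidableEq S]
    (H : ℕ → Matrix S S ℝ) (k t : ℕ) (hit : k + 1 ≤ t) :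
    prodSlice H k t = H k * prodSlice H (k + 1) t := by
  unfold prodSlice
  have h1 : t - k = (t - (k + 1)) + 1 := by omega
  rw [h1, List.range_succ_eq_map, List.map_cons, List.map_map, List.prod_cons]
  simp only [Nat.add_zero]
  have h2 : ((fun j => H (k + j)) ∘ Nat.succ) = fun j => H (k + 1 + j) := by
    funext j
    simp only [Function.comp, Nat.succ_eq_add_one]
    ring_nf
  rw [h2]

/-- Difference sequence of the Doob martingale: with
`B i = Σ_{t=1}^{i} X t + Σ_{t=i+1}^{T} (H_{i:t})ᵀ X i` for `1 ≤ i ≤ T` and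
`B 0 = Σ_{t=1}^{T} (H_{0:t})ᵀ X 0`, one has
`B i - B (i-1) = Σ_{t=i}^{T} (H_{i:t})ᵀ (X i - (H (i-1))ᵀ X (i-1))`. -/
theorem doob_martingale_difference {S : Type*} [Fintype S] [DecidableEq S] [Nonempty S]
    (T : ℕ) (hT : 1 ≤ T)
    (X : ℕ → S → ℝ)
    (hXnonneg : ∀ t, t ≤ T → ∀ s, 0 ≤ X t s)
    (hXsum : ∀ t, t ≤ T → ∑ s, X t s = 1)
    (H : ℕ → Matrix S S ℝ)
    (hnonneg : ∀ t, t < T → ∀ s s', 0 ≤ H t s s')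
    (hrowsum : ∀ t, t < T → ∀ s, ∑ s', H t s s' = 1)
    (B : ℕ → S → ℝ)
    (hB0 : B 0 = ∑ t ∈ Finset.Icc 1 T, ((prodSlice H 0 t)ᵀ).mulVec (X 0))
    (hBi : ∀ i, 1 ≤ i → i ≤ T →
      B i = (∑ t ∈ Finset.Icc 1 i, X t)
        + ∑ t ∈ Finset.Icc (i + 1) T, ((prodSlice H i t)ᵀ).mulVec (X i)) :
    ∀ i, 1 ≤ i → i ≤ T →
      B i - B (i - 1)
        = ∑ t ∈ Finset.Icc i T,
            ((prodSlice H i t)ᵀ).mulVec (X i - (H (i - 1))ᵀ.mulVec (X (i - 1))) := by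
  intro i h1 hi
  have hii : i - 1 + 1 = i := by omega
  have hBprev : B (i - 1) = (∑ t ∈ Finset.Icc 1 (i - 1), X t)
      + ∑ t ∈ Finset.Icc i T, ((prodSlice H (i - 1) t)ᵀ).mulVec (X (i - 1)) := by
    rcases Nat.eq_or_lt_of_le h1 with h | h
    · rw [← h]; simpa using hB0
    · rw [hBi (i - 1) (by omega) (by omega), hii]
  have hBcur : B i = (∑ t ∈ Finset.Icc 1 (i - 1), X t)
      + ∑ t ∈ Finset.Icc i T, ((prodSlice H i t)ᵀ).mulVec (X i) := by
    rw [hBi i h1 hi]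
    have hsum1 : ∑ t ∈ Finset.Icc 1 i, X t
        = (∑ t ∈ Finset.Icc 1 (i - 1), X t) + X i := by
      rw [← hii, Finset.sum_Icc_succ_top (by omega), hii]
    have hins : Finset.Icc i T = insert i (Finset.Icc (i + 1) T) := by
      ext x; simp only [Finset.mem_Icc, Finset.mem_insert]; omega
    have hnotmem : i ∉ Finset.Icc (i + 1) T := by simp
    rw [hsum1, hins, Finset.sum_insert hnotmem, prodSlice_self]
    simp only [Matrix.transpose_one, Matrix.one_mulVec]
    abel
  have hterm : ∀ t ∈ Finset.Icc i T,
      ((prodSlice H (i - 1) t)ᵀ).mulVec (X (i - 1))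
        = ((prodSlice H i t)ᵀ).mulVec ((H (i - 1))ᵀ.mulVec (X (i - 1))) := by
    intro t ht
    rw [Finset.mem_Icc] at ht
    rw [Matrix.mulVec_mulVec, ← Matrix.transpose_mul,
      prodSlice_cons H (i - 1) t (by omega), hii]
  rw [hBcur, hBprev, Finset.sum_congr rfl hterm]
  simp only [Matrix.mulVec_sub, Finset.sum_sub_distrib]
  abel
end

section
/- Let S be a finite nonempty set, let H be a row-stochastic matrix on S with ergodicity coefficient at most γ where 0 ≤ γ < 1, let ν be a stationary distribution of H (a distribution vector with Hᵀ ν = ν), and let r : S → ℝ satisfy |r(s)| ≤ 1 for all s. Set J = Σ_s ν_s r(s). Then for every s ∈ S the series Q(s) = Σ_{i=0}^{∞} ((H^i r)(s) − J) converges absolutely, and Q satisfies the Bellman equation Q(s) = r(s) − J + Σ_{s'} H_{s,s'} Q(s') for every s ∈ S. -/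
open Finset Matrix BigOperators

/-- The differential value function `Q(s) = Σ_{i=0}^∞ ((H^i r)(s) - J)` is well defined
(the series converges absolutely) and satisfies the Bellman equation
`Q(s) = r(s) - J + Σ_{s'} H s s' * Q(s')`. -/
theorem value_function_series_bellman {S : Type*} [Fintype S] [DecidableEq S] [Nonempty S]
    (H : Matrix S S ℝ) (γ : ℝ) (hγ0 : 0 ≤ γ) (hγ1 : γ < 1)
    (hnonneg : ∀ s s', 0 ≤ H s s')
    (hrowsum : ∀ s, ∑ s', H s s' = 1)
    (herg : ∀ z : S → ℝ, (∑ s, z s) = 0 →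
      ∑ s, |Hᵀ.mulVec z s| ≤ γ * ∑ s, |z s|)
    (ν : S → ℝ) (hνnonneg : ∀ s, 0 ≤ ν s) (hνsum : ∑ s, ν s = 1)
    (hstat : Hᵀ.mulVec ν = ν)
    (r : S → ℝ) (hr : ∀ s, |r s| ≤ 1)
    (J : ℝ) (hJ : J = ∑ s, ν s * r s) :
    (∀ s, Summable (fun i : ℕ => |((H ^ i).mulVec r) s - J|))
      ∧ (∀ s, (∑' i : ℕ, (((H ^ i).mulVec r) s - J))
          = r s - J + ∑ s', H s s' * (∑' i : ℕ, (((H ^ i).mulVec r) s' - J))) := by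
  -- Hᵀ preserves sum-zero vectors
  have hsumzero : ∀ z : S → ℝ, (∑ s, z s) = 0 → ∑ s, Hᵀ.mulVec z s = 0 := by
    intro z hz
    simp only [Matrix.mulVec, Matrix.transpose_apply, dotProduct]
    rw [Finset.sum_comm]
    calc ∑ t, ∑ s, H t s * z t = ∑ t, z t * ∑ s, H t s := by
          simp [Finset.mul_sum, mul_comm]
      _ = 0 := by simp [hrowsum, hz]
  -- iterated contraction
  have hiter : ∀ (i : ℕ) (z : S → ℝ), (∑ s, z s) = 0 →
      (∑ s, (Hᵀ ^ i).mulVec z s = 0) ∧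
        ∑ s, |(Hᵀ ^ i).mulVec z s| ≤ γ ^ i * ∑ s, |z s| := by
    intro i
    induction i with
    | zero => intro z hz; simp [Matrix.one_mulVec, hz]
    | succ n ih =>
      intro z hz
      have h1 := hsumzero z hz
      have h2 := ih (Hᵀ.mulVec z) h1
      have hpow : (Hᵀ ^ (n+1)).mulVec z = (Hᵀ ^ n).mulVec (Hᵀ.mulVec z) := by
        rw [pow_succ, ← Matrix.mulVec_mulVec]
      refine ⟨by rw [hpow]; exact h2.1, ?_⟩
      rw [hpow]
      calc ∑ s, |(Hᵀ ^ n).mulVec (Hᵀ.mulVec z) s| ≤ γ ^ n * ∑ s, |Hᵀ.mulVec z s| := h2.2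
        _ ≤ γ ^ n * (γ * ∑ s, |z s|) :=
            mul_le_mul_of_nonneg_left (herg z hz) (pow_nonneg hγ0 n)
        _ = γ ^ (n+1) * ∑ s, |z s| := by ring
  -- stationarity iterated
  have hstatiter : ∀ i : ℕ, (Hᵀ ^ i).mulVec ν = ν := by
    intro i
    induction i with
    | zero => simp [Matrix.one_mulVec]
    | succ n ih =>
      rw [pow_succ, ← Matrix.mulVec_mulVec, hstat, ih]
  -- key bound
  have key : ∀ (i : ℕ) (s : S), |((H ^ i).mulVec r) s - J| ≤ 2 * γ ^ i := by
    intro i s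
    set z : S → ℝ := fun t => (if t = s then (1:ℝ) else 0) - ν t with hzdef
    have hzsum : ∑ t, z t = 0 := by
      simp [hzdef, Finset.sum_sub_distrib, hνsum]
    have hzabs : ∑ t, |z t| ≤ 2 := by
      have hb : ∀ t, |z t| ≤ (if t = s then (1:ℝ) else 0) + ν t := by
        intro t
        have hν := hνnonneg t
        rw [abs_le]
        constructor <;> simp only [hzdef] <;> split_ifs <;> linarith
      calc ∑ t, |z t| ≤ ∑ t, ((if t = s then (1:ℝ) else 0) + ν t) :=
            Finset.sum_le_sum fun t _ => hb t
        _ = 2 := by simp [Finset.sum_add_distrib, hνsum]; norm_num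
    -- identity: ∑ s', ((Hᵀ^i).mulVec z) s' * r s' = (H^i r) s - J
    have hid : ∑ s', ((Hᵀ ^ i).mulVec z) s' * r s' = ((H ^ i).mulVec r) s - J := by
      have hsplit : ∀ s', ((Hᵀ ^ i).mulVec z) s'
          = (H ^ i) s s' - ν s' := by
        intro s'
        have h1 : ((Hᵀ ^ i).mulVec z) s'
            = ((Hᵀ ^ i).mulVec (fun t => if t = s then (1:ℝ) else 0)) s'
              - ((Hᵀ ^ i).mulVec ν) s' := by
          simp only [Matrix.mulVec, dotProduct, hzdef, mul_sub,
            Finset.sum_sub_distrib]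
        rw [h1, hstatiter i]
        congr 1
        simp only [Matrix.mulVec, dotProduct, ← Matrix.transpose_pow,
          Matrix.transpose_apply]
        simp
      calc ∑ s', ((Hᵀ ^ i).mulVec z) s' * r s'
          = ∑ s', ((H ^ i) s s' - ν s') * r s' := by
            refine Finset.sum_congr rfl fun s' _ => by rw [hsplit s']
        _ = (∑ s', (H ^ i) s s' * r s') - ∑ s', ν s' * r s' := by
            simp [sub_mul, Finset.sum_sub_distrib]
        _ = ((H ^ i).mulVec r) s - J := by
            rw [hJ]; rfl
    rw [← hid]
    calc |∑ s', ((Hᵀ ^ i).mulVec z) s' * r s'|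
        ≤ ∑ s', |((Hᵀ ^ i).mulVec z) s' * r s'| := Finset.abs_sum_le_sum_abs _ _
      _ ≤ ∑ s', |((Hᵀ ^ i).mulVec z) s'| := by
          refine Finset.sum_le_sum fun s' _ => ?_
          rw [abs_mul]
          calc |((Hᵀ ^ i).mulVec z) s'| * |r s'|
              ≤ |((Hᵀ ^ i).mulVec z) s'| * 1 :=
                mul_le_mul_of_nonneg_left (hr s') (abs_nonneg _)
            _ = _ := mul_one _
      _ ≤ γ ^ i * ∑ t, |z t| := (hiter i z hzsum).2
      _ ≤ γ ^ i * 2 := mul_le_mul_of_nonneg_left hzabs (pow_nonneg hγ0 i)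
      _ = 2 * γ ^ i := mul_comm _ _
  -- summability
  have hsummable : ∀ s, Summable (fun i : ℕ => |((H ^ i).mulVec r) s - J|) := by
    intro s
    refine Summable.of_nonneg_of_le (fun i => abs_nonneg _) (fun i => key i s) ?_
    exact (summable_geometric_of_lt_one hγ0 hγ1).mul_left 2
  refine ⟨hsummable, fun s => ?_⟩
  have hsum : ∀ s, Summable (fun i : ℕ => ((H ^ i).mulVec r) s - J) :=
    fun s => (hsummable s).of_abs
  -- recurrence: a (i+1) s = ∑ s', H s s' * a i s'
  have hrec : ∀ (i : ℕ) (s : S), ((H ^ (i+1)).mulVec r) s - J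
      = ∑ s', H s s' * (((H ^ i).mulVec r) s' - J) := by
    intro i s
    have h1 : ((H ^ (i+1)).mulVec r) s = ∑ s', H s s' * ((H ^ i).mulVec r) s' := by
      rw [pow_succ']
      rw [← Matrix.mulVec_mulVec]
      rfl
    rw [h1]
    have h2 : (J : ℝ) = ∑ s', H s s' * J := by
      rw [← Finset.sum_mul, hrowsum, one_mul]
    calc (∑ s', H s s' * ((H ^ i).mulVec r) s') - J
        = (∑ s', H s s' * ((H ^ i).mulVec r) s') - ∑ s', H s s' * J := by rw [← h2]
      _ = ∑ s', H s s' * (((H ^ i).mulVec r) s' - J) := by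
          simp [mul_sub, Finset.sum_sub_distrib]
  -- Bellman
  rw [Summable.tsum_eq_zero_add (hsum s)]
  have h0 : ((H ^ 0).mulVec r) s - J = r s - J := by
    simp [Matrix.one_mulVec]
  rw [h0]
  congr 1
  calc ∑' i : ℕ, (((H ^ (i+1)).mulVec r) s - J)
      = ∑' i : ℕ, ∑ s', H s s' * (((H ^ i).mulVec r) s' - J) := by
        exact tsum_congr fun i => hrec i s
    _ = ∑ s', ∑' i : ℕ, H s s' * (((H ^ i).mulVec r) s' - J) := by
        refine Summable.tsum_finsetSum fun s' _ => ((hsum s').mul_left _)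
    _ = ∑ s', H s s' * ∑' i : ℕ, (((H ^ i).mulVec r) s' - J) := by
        refine Finset.sum_congr rfl fun s' _ => tsum_mul_left
end

section
/- Let S be a finite nonempty set, let H be a row-stochastic matrix on S with ergodicity coefficient at most γ where 0 ≤ γ < 1, let ν be a stationary distribution of H (a distribution vector with Hᵀ ν = ν), and let r : S → ℝ satisfy |r(s)| ≤ 1 for all s. Set J = Σ_s ν_s r(s), Q(s) = Σ_{i=0}^{∞} ((H^i r)(s) − J), and the b-step truncation Q^b(s) = Σ_{i=0}^{b} ((H^i r)(s) − J) for a natural number b. Then for every s ∈ S, |Q(s) − Q^b(s)| ≤ 2 γ^{b+1} / (1 − γ). -/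
open Finset Matrix BigOperators

/-- Truncation bias of `b`-step returns: with `Q(s) = Σ_{i=0}^∞ ((H^i r)(s) - J)` and its
truncation `Q^b(s) = Σ_{i=0}^{b} ((H^i r)(s) - J)`, one has
`|Q(s) - Q^b(s)| ≤ 2 γ^{b+1} / (1 - γ)`. -/
theorem value_function_truncation_bias {S : Type*} [Fintype S] [DecidableEq S] [Nonempty S]
    (H : Matrix S S ℝ) (γ : ℝ) (hγ0 : 0 ≤ γ) (hγ1 : γ < 1)
    (hnonneg : ∀ s s', 0 ≤ H s s')
    (hrowsum : ∀ s, ∑ s', H s s' = 1)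
    (herg : ∀ z : S → ℝ, (∑ s, z s) = 0 →
      ∑ s, |Hᵀ.mulVec z s| ≤ γ * ∑ s, |z s|)
    (ν : S → ℝ) (hνnonneg : ∀ s, 0 ≤ ν s) (hνsum : ∑ s, ν s = 1)
    (hstat : Hᵀ.mulVec ν = ν)
    (r : S → ℝ) (hr : ∀ s, |r s| ≤ 1)
    (J : ℝ) (hJ : J = ∑ s, ν s * r s)
    (b : ℕ) :
    ∀ s, |(∑' i : ℕ, (((H ^ i).mulVec r) s - J))
        - ∑ i ∈ Finset.range (b + 1), (((H ^ i).mulVec r) s - J)|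
      ≤ 2 * γ ^ (b + 1) / (1 - γ) := by
  -- sum of Hᵀ.mulVec z equals sum of z
  have hsum0 : ∀ z : S → ℝ, ∑ s, Hᵀ.mulVec z s = ∑ s, z s := by
    intro z
    simp only [Matrix.mulVec, dotProduct, Matrix.transpose_apply]
    rw [Finset.sum_comm]
    refine Finset.sum_congr rfl fun t _ => ?_
    rw [← Finset.sum_mul, hrowsum t, one_mul]
  -- iterated ergodicity
  have hiter : ∀ (i : ℕ) (z : S → ℝ), (∑ s, z s) = 0 →
      ∑ t, |((Hᵀ) ^ i).mulVec z t| ≤ γ ^ i * ∑ t, |z t| := by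
    intro i
    induction i with
    | zero => intro z hz; simp
    | succ i ih =>
      intro z hz
      have h1 : ((Hᵀ) ^ (i+1)).mulVec z = ((Hᵀ) ^ i).mulVec (Hᵀ.mulVec z) := by
        rw [pow_succ, Matrix.mulVec_mulVec]
      rw [h1]
      calc ∑ t, |((Hᵀ) ^ i).mulVec (Hᵀ.mulVec z) t|
          ≤ γ ^ i * ∑ t, |Hᵀ.mulVec z t| := ih _ (by rw [hsum0]; exact hz)
        _ ≤ γ ^ i * (γ * ∑ t, |z t|) := by
            apply mul_le_mul_of_nonneg_left (herg z hz) (pow_nonneg hγ0 i)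
        _ = γ ^ (i+1) * ∑ t, |z t| := by ring
  -- stationarity iterated
  have hstat' : ∀ i : ℕ, ((Hᵀ) ^ i).mulVec ν = ν := by
    intro i
    induction i with
    | zero => simp
    | succ i ih => rw [pow_succ, ← Matrix.mulVec_mulVec, hstat, ih]
  intro s
  set z : S → ℝ := fun t => (if t = s then 1 else 0) - ν t with hzdef
  have hzsum : ∑ t, z t = 0 := by
    simp [hzdef, Finset.sum_sub_distrib, hνsum]
  have hznorm : ∑ t, |z t| ≤ 2 := by
    calc ∑ t, |z t| ≤ ∑ t, ((if t = s then (1:ℝ) else 0) + ν t) := by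
          refine Finset.sum_le_sum fun t _ => ?_
          refine (abs_sub _ _).trans ?_
          rw [abs_of_nonneg (by positivity), abs_of_nonneg (hνnonneg t)]
      _ = 2 := by rw [Finset.sum_add_distrib, hνsum]; norm_num
  -- key term bound
  have hterm : ∀ i : ℕ, |((H ^ i).mulVec r) s - J| ≤ 2 * γ ^ i := by
    intro i
    have hrepr : ((H ^ i).mulVec r) s - J = ∑ t, ((Hᵀ) ^ i).mulVec z t * r t := by
      have : ∀ t, ((Hᵀ) ^ i).mulVec z t
          = (H ^ i) s t - ((Hᵀ) ^ i).mulVec ν t := by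
        intro t
        simp only [Matrix.mulVec, dotProduct, hzdef, mul_sub,
          Finset.sum_sub_distrib, ← Matrix.transpose_pow, Matrix.transpose_apply]
        congr 1
        simp
      simp only [this, sub_mul, Finset.sum_sub_distrib, hstat' i]
      rw [hJ]
      rfl
    rw [hrepr]
    calc |∑ t, ((Hᵀ) ^ i).mulVec z t * r t|
        ≤ ∑ t, |((Hᵀ) ^ i).mulVec z t * r t| := Finset.abs_sum_le_sum_abs _ _
      _ ≤ ∑ t, |((Hᵀ) ^ i).mulVec z t| := by
          refine Finset.sum_le_sum fun t _ => ?_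
          rw [abs_mul]
          exact mul_le_of_le_one_right (abs_nonneg _) (hr t)
      _ ≤ γ ^ i * ∑ t, |z t| := hiter i z hzsum
      _ ≤ γ ^ i * 2 := by
          exact mul_le_mul_of_nonneg_left hznorm (pow_nonneg hγ0 i)
      _ = 2 * γ ^ i := by ring
  set f : ℕ → ℝ := fun i => ((H ^ i).mulVec r) s - J with hfdef
  have hsummable : Summable f := by
    apply Summable.of_norm_bounded (g := fun i => 2 * γ ^ i)
      ((summable_geometric_of_lt_one hγ0 hγ1).mul_left 2)
    intro i; simpa using hterm i
  have htail : (∑' i, f i) - ∑ i ∈ Finset.range (b+1), f i = ∑' i, f (i + (b+1)) := by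
    rw [← (Summable.sum_add_tsum_nat_add (b+1) hsummable)]
    ring
  show |(∑' i, f i) - ∑ i ∈ Finset.range (b+1), f i| ≤ 2 * γ ^ (b+1) / (1-γ)
  rw [htail, ← Real.norm_eq_abs]
  have hsum2 : Summable (fun i : ℕ => 2 * γ ^ (b+1) * γ ^ i) :=
    (summable_geometric_of_lt_one hγ0 hγ1).mul_left _
  have habs : ∀ i : ℕ, ‖f (i + (b+1))‖ ≤ 2 * γ ^ (b+1) * γ ^ i := by
    intro i
    calc ‖f (i + (b+1))‖ = |f (i + (b+1))| := rfl
      _ ≤ 2 * γ ^ (i + (b+1)) := hterm _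
      _ = 2 * γ ^ (b+1) * γ ^ i := by rw [pow_add]; ring
  have hsumf : Summable (fun i : ℕ => ‖f (i + (b+1))‖) := by
    apply hsum2.of_norm_bounded
    intro i
    simpa using habs i
  calc ‖∑' i, f (i + (b+1))‖
      ≤ ∑' i, ‖f (i + (b+1))‖ := norm_tsum_le_tsum_norm hsumf
    _ ≤ ∑' i, 2 * γ ^ (b+1) * γ ^ i := Summable.tsum_le_tsum habs hsumf hsum2
    _ = 2 * γ ^ (b+1) * (1-γ)⁻¹ := by
        rw [tsum_mul_left, tsum_geometric_of_lt_one hγ0 hγ1]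
    _ = 2 * γ ^ (b+1) / (1-γ) := by ring
end

section
/- Let A be a finite nonempty set, let w : A → ℝ and q : A → ℝ, and let η > 0. Define the probability distributions p(a) = exp(w(a)) / Σ_{a'} exp(w(a')) and p'(a) = exp(w(a) + η q(a)) / Σ_{a'} exp(w(a') + η q(a')). Then Σ_{a ∈ A} |p'(a) − p(a)| ≤ η · max_{a ∈ A} |q(a)|. -/
open Finset BigOperators

section derivpart
variable {A : Type*} [Fintype A] [Nonempty A] (w q : A → ℝ)

noncomputable def Ssum (t : ℝ) : ℝ := ∑ a, Real.exp (w a + t * q a)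

lemma Ssum_pos (t : ℝ) : 0 < Ssum w q t :=
  Finset.sum_pos (fun a _ => Real.exp_pos _) Finset.univ_nonempty

noncomputable def sm (t : ℝ) (a : A) : ℝ := Real.exp (w a + t * q a) / Ssum w q t

lemma sm_nonneg (t : ℝ) (a : A) : 0 ≤ sm w q t a :=
  div_nonneg (Real.exp_pos _).le (Ssum_pos w q t).le

lemma sm_sum (t : ℝ) : ∑ a, sm w q t a = 1 := by
  simp only [sm]
  rw [← Finset.sum_div]
  exact div_self (Ssum_pos w q t).ne'

lemma hasDerivAt_Ssum (t : ℝ) :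
    HasDerivAt (Ssum w q) (∑ a, q a * Real.exp (w a + t * q a)) t := by
  apply HasDerivAt.fun_sum
  intro a _
  have h1 : HasDerivAt (fun t : ℝ => w a + t * q a) (q a) t := by
    simpa using (hasDerivAt_id t |>.mul_const (q a)).const_add (w a)
  simpa [mul_comm, Function.comp_def] using (Real.hasDerivAt_exp (w a + t * q a)).comp t h1

lemma hasDerivAt_sm (t : ℝ) (a : A) :
    HasDerivAt (fun t => sm w q t a)
      (sm w q t a * (q a - ∑ a', sm w q t a' * q a')) t := by
  have h1 : HasDerivAt (fun t : ℝ => w a + t * q a) (q a) t := by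
    simpa using (hasDerivAt_id t |>.mul_const (q a)).const_add (w a)
  have hu : HasDerivAt (fun t => Real.exp (w a + t * q a))
      (q a * Real.exp (w a + t * q a)) t := by
    simpa [mul_comm, Function.comp_def] using (Real.hasDerivAt_exp (w a + t * q a)).comp t h1
  have h := hu.div (hasDerivAt_Ssum w q t) (Ssum_pos w q t).ne'
  refine h.congr_deriv (Eq.symm ?_)
  have hS := (Ssum_pos w q t).ne'
  simp only [sm]
  rw [Finset.sum_congr rfl (fun a' _ => div_mul_eq_mul_div (Real.exp (w a' + t * q a')) (Ssum w q t) (q a')), ← Finset.sum_div]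
  field_simp
end derivpart

lemma pil1_norm {A : Type*} [Fintype A] (x : PiLp 1 (fun _ : A => ℝ)) :
    ‖x‖ = ∑ a, |x a| := by
  rw [PiLp.norm_eq_sum (by norm_num)]
  simp [Real.norm_eq_abs]

lemma mad_le {A : Type*} [Fintype A] [Nonempty A] (p q : A → ℝ) (M : ℝ)
    (hp : ∀ a, 0 ≤ p a) (hsum : ∑ a, p a = 1) (hq : ∀ a, |q a| ≤ M) :
    ∑ a, |p a * (q a - ∑ a', p a' * q a')| ≤ M := by
  set c : ℝ := ∑ a', p a' * q a' with hc
  have hM0 : 0 ≤ M := le_trans (abs_nonneg _) (hq (Classical.arbitrary A))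
  have key : (∑ a, |p a * (q a - c)|) ^ 2 ≤ M ^ 2 := by
    have cs := Finset.sum_mul_sq_le_sq_mul_sq Finset.univ
      (fun a => Real.sqrt (p a)) (fun a => Real.sqrt (p a) * |q a - c|)
    have h1 : ∀ a : A, Real.sqrt (p a) * (Real.sqrt (p a) * |q a - c|)
        = |p a * (q a - c)| := by
      intro a
      rw [← mul_assoc, Real.mul_self_sqrt (hp a), abs_mul, abs_of_nonneg (hp a)]
    have h2 : ∀ a : A, Real.sqrt (p a) ^ 2 = p a := fun a => Real.sq_sqrt (hp a)
    have h3 : ∀ a : A, (Real.sqrt (p a) * |q a - c|) ^ 2 = p a * (q a - c) ^ 2 := by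
      intro a; rw [mul_pow, h2, sq_abs]
    simp only [h1, h3, h2] at cs
    rw [hsum, one_mul] at cs
    refine cs.trans ?_
    have hvar : ∑ a, p a * (q a - c) ^ 2 = (∑ a, p a * q a ^ 2) - c ^ 2 := by
      have : ∀ a : A, p a * (q a - c) ^ 2
          = p a * q a ^ 2 - 2 * c * (p a * q a) + c ^ 2 * p a := by
        intro a; ring
      rw [Finset.sum_congr rfl (fun a _ => this a), Finset.sum_add_distrib,
        Finset.sum_sub_distrib, ← Finset.mul_sum, ← Finset.mul_sum, hsum, ← hc]
      ring
    rw [hvar]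
    have : ∑ a, p a * q a ^ 2 ≤ M ^ 2 := by
      calc ∑ a, p a * q a ^ 2 ≤ ∑ a, p a * M ^ 2 := by
            refine Finset.sum_le_sum fun a _ => ?_
            exact mul_le_mul_of_nonneg_left
              (by rw [← sq_abs]; exact pow_le_pow_left₀ (abs_nonneg _) (hq a) 2) (hp a)
        _ = M ^ 2 := by rw [← Finset.sum_mul, hsum, one_mul]
    nlinarith [sq_nonneg c]
  have hnn : 0 ≤ ∑ a, |p a * (q a - c)| := Finset.sum_nonneg fun a _ => abs_nonneg _
  nlinarith

/-- Stability of exponential weights: the softmax distributions of `w` and `w + η q`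
differ in `ℓ₁` distance by at most `η max_a |q a|`. -/
theorem exp_weights_stability {A : Type*} [Fintype A] [Nonempty A]
    (w q : A → ℝ) (η : ℝ) (hη : 0 < η) :
    ∑ a, |Real.exp (w a + η * q a) / (∑ a', Real.exp (w a' + η * q a'))
          - Real.exp (w a) / (∑ a', Real.exp (w a'))|
      ≤ η * Finset.univ.sup' Finset.univ_nonempty (fun a => |q a|) := by
  set M := Finset.univ.sup' Finset.univ_nonempty (fun a => |q a|) with hM
  have hqM : ∀ a, |q a| ≤ M := fun a => Finset.le_sup' (fun a => |q a|) (Finset.mem_univ a)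
  set e := PiLp.continuousLinearEquiv 1 ℝ (fun _ : A => ℝ) with he
  set G : ℝ → PiLp 1 (fun _ : A => ℝ) := fun t => e.symm (sm w q t) with hG
  set D : ℝ → PiLp 1 (fun _ : A => ℝ) :=
    fun t => e.symm (fun a => sm w q t a * (q a - ∑ a', sm w q t a' * q a')) with hD
  have hGderiv : ∀ t : ℝ, HasDerivAt G (D t) t := by
    intro t
    have hpi : HasDerivAt (fun t => fun a => sm w q t a)
        (fun a => sm w q t a * (q a - ∑ a', sm w q t a' * q a')) t :=
      hasDerivAt_pi.mpr (fun a => hasDerivAt_sm w q t a)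
    exact (e.symm.toContinuousLinearMap.hasFDerivAt).comp_hasDerivAt t hpi
  have hbound : ∀ t : ℝ, ‖D t‖ ≤ M := by
    intro t
    rw [pil1_norm]
    exact mad_le (sm w q t) q M (sm_nonneg w q t) (sm_sum w q t) hqM
  have mvt := Convex.norm_image_sub_le_of_norm_hasDerivWithin_le
    (f := G) (f' := D) (s := Set.Icc 0 η) (C := M)
    (fun x _ => (hGderiv x).hasDerivWithinAt)
    (fun x _ => hbound x) (convex_Icc 0 η)
    (Set.left_mem_Icc.mpr hη.le) (Set.right_mem_Icc.mpr hη.le)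
  rw [pil1_norm] at mvt
  have hcoord : ∀ a, (G η - G 0) a = sm w q η a - sm w q 0 a := fun a => rfl
  simp only [hcoord] at mvt
  have hsm0 : ∀ a, sm w q 0 a = Real.exp (w a) / ∑ a', Real.exp (w a') := by
    intro a; simp [sm, Ssum]
  have hsmη : ∀ a, sm w q η a
      = Real.exp (w a + η * q a) / ∑ a', Real.exp (w a' + η * q a') := by
    intro a; simp [sm, Ssum]
  calc ∑ a, |Real.exp (w a + η * q a) / (∑ a', Real.exp (w a' + η * q a'))
          - Real.exp (w a) / (∑ a', Real.exp (w a'))|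
      = ∑ a, |sm w q η a - sm w q 0 a| := by
        refine Finset.sum_congr rfl fun a _ => ?_
        rw [hsm0, hsmη]
    _ ≤ M * ‖η - (0:ℝ)‖ := mvt
    _ = η * M := by rw [sub_zero, Real.norm_eq_abs, abs_of_pos hη]; ring
end

section
/- Let S be a finite nonempty set and n ≥ 1. Let p₁ be a probability distribution on S and, for j = 2, …, n, let K_j : S → (probability distributions on S) be transition kernels. Define the joint distribution P on S^n by P(x₁, …, x_n) = p₁(x₁) · Π_{j=2}^{n} K_j(x_{j−1})(x_j), and let q_j denote the j-th marginal of P, i.e., q_j(y) = Σ_{x : x_j = y} P(x). Suppose there is β ≥ 0 such that Σ_{y ∈ S} |K_j(x)(y) − q_j(y)| ≤ β for every j ∈ {2, …, n} and every x ∈ S. Then Σ_{x ∈ S^n} | P(x) − Π_{j=1}^{n} q_j(x_j) | ≤ (n − 1) β. -/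
open Finset BigOperators


lemma ib_sum_snoc {S : Type*} [Fintype S] {n : ℕ} (f : (Fin (n+1) → S) → ℝ) :
    ∑ x : Fin (n+1) → S, f x = ∑ x : Fin n → S, ∑ s : S, f (Fin.snoc x s) := by
  rw [← Equiv.sum_comp (Fin.snocEquiv (fun _ => S)) f, Fintype.sum_prod_type,
    Finset.sum_comm]
  rfl

lemma ib_snoc_zero {S : Type*} {n : ℕ} (x : Fin (n+1) → S) (s : S) :
    (Fin.snoc x s : Fin (n+2) → S) 0 = x 0 := by
  rw [show (0 : Fin (n+2)) = Fin.castSucc 0 by simp, Fin.snoc_castSucc]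

lemma ib_snoc_prod {S : Type*} {n : ℕ} (K : Fin (n+1) → S → S → ℝ)
    (x : Fin (n+1) → S) (s : S) :
    (∏ j : Fin (n+1), K j ((Fin.snoc x s : Fin (n+2) → S) j.castSucc)
        ((Fin.snoc x s : Fin (n+2) → S) j.succ))
    = (∏ j : Fin n, K j.castSucc (x j.castSucc) (x j.succ)) *
        K (Fin.last n) (x (Fin.last n)) s := by
  rw [Fin.prod_univ_castSucc]
  congr 1
  · refine Finset.prod_congr rfl fun j _ => ?_
    rw [Fin.snoc_castSucc, Fin.succ_castSucc, Fin.snoc_castSucc]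
  · rw [Fin.snoc_castSucc, Fin.succ_last, Fin.snoc_last]

lemma ib_chain_sum {S : Type*} [Fintype S] :
    ∀ (m : ℕ) (p1 : S → ℝ), (∑ s, p1 s) = 1 →
    ∀ (K : Fin m → S → S → ℝ), (∀ j s, ∑ y, K j s y = 1) →
    ∑ x : Fin (m+1) → S, p1 (x 0) * ∏ j : Fin m, K j (x j.castSucc) (x j.succ) = 1 := by
  intro m
  induction m with
  | zero =>
    intro p1 hp1 K hK
    rw [← Equiv.sum_comp (Equiv.funUnique (Fin 1) S).symm]
    simpa using hp1
  | succ m ih =>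
    intro p1 hp1 K hK
    rw [ib_sum_snoc]
    have key : ∀ (x : Fin (m+1) → S),
        ∑ s : S, p1 ((Fin.snoc x s : Fin (m+2) → S) 0) *
          ∏ j : Fin (m+1), K j ((Fin.snoc x s : Fin (m+2) → S) j.castSucc) ((Fin.snoc x s : Fin (m+2) → S) j.succ)
        = p1 (x 0) * ∏ j : Fin m, K j.castSucc (x j.castSucc) (x j.succ) := by
      intro x
      calc ∑ s : S, p1 ((Fin.snoc x s : Fin (m+2) → S) 0) *
            ∏ j : Fin (m+1), K j ((Fin.snoc x s : Fin (m+2) → S) j.castSucc) ((Fin.snoc x s : Fin (m+2) → S) j.succ)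
          = ∑ s : S, (p1 (x 0) * ∏ j : Fin m, K j.castSucc (x j.castSucc) (x j.succ)) *
              K (Fin.last m) (x (Fin.last m)) s := by
            refine Finset.sum_congr rfl fun s _ => ?_
            rw [ib_snoc_zero, ib_snoc_prod, mul_assoc]
        _ = _ := by rw [← Finset.mul_sum, hK, mul_one]
    rw [Finset.sum_congr rfl fun x _ => key x]
    exact ih p1 hp1 (fun j => K j.castSucc) (fun j s => hK j.castSucc s)

lemma ib_main {S : Type*} [Fintype S] [DecidableEq S] (β : ℝ) (hβ : 0 ≤ β) :
    ∀ (m : ℕ)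
    (p1 : S → ℝ), (∀ s, 0 ≤ p1 s) → (∑ s, p1 s = 1) →
    ∀ (K : Fin m → S → S → ℝ), (∀ j s y, 0 ≤ K j s y) → (∀ j s, ∑ y, K j s y = 1) →
    ∀ (P : (Fin (m + 1) → S) → ℝ),
    (∀ x : Fin (m + 1) → S, P x = p1 (x 0) * ∏ j : Fin m, K j (x j.castSucc) (x j.succ)) →
    ∀ (q : Fin (m + 1) → S → ℝ),
    (∀ j y, q j y = ∑ x : Fin (m + 1) → S, if x j = y then P x else 0) →
    (∀ j : Fin m, ∀ s : S, ∑ y, |K j s y - q j.succ y| ≤ β) →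
    ∑ x : Fin (m + 1) → S, |P x - ∏ j, q j (x j)| ≤ m * β := by
  intro m
  induction m with
  | zero =>
    intro p1 hp1n hp1s K hKn hKs P hP q hq hclose
    have hq0 : ∀ y, q 0 y = p1 y := by
      intro y
      rw [hq]
      rw [← Equiv.sum_comp (Equiv.funUnique (Fin 1) S).symm]
      simp [hP]
    have h0 : ∀ x : Fin 1 → S, |P x - ∏ j, q j (x j)| = 0 := by
      intro x
      rw [hP]
      simp [Fin.prod_univ_one, hq0]
    calc ∑ x : Fin (0+1) → S, |P x - ∏ j, q j (x j)|
        = ∑ _x : Fin (0+1) → S, (0:ℝ) := Finset.sum_congr rfl fun x _ => h0 x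
      _ ≤ _ := by simp
  | succ m ih =>
    intro p1 hp1n hp1s K hKn hKs P hP q hq hclose
    set K' : Fin m → S → S → ℝ := fun j => K j.castSucc with hK'
    set P' : (Fin (m+1) → S) → ℝ :=
      fun x => p1 (x 0) * ∏ j : Fin m, K' j (x j.castSucc) (x j.succ) with hP'
    set q' : Fin (m+1) → S → ℝ :=
      fun j y => ∑ x : Fin (m+1) → S, if x j = y then P' x else 0 with hq'
    have hP'nonneg : ∀ x, 0 ≤ P' x := fun x =>
      mul_nonneg (hp1n _) (Finset.prod_nonneg fun j _ => hKn _ _ _)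
    have hA : ∀ (x : Fin (m+1) → S) (s : S),
        P (Fin.snoc x s) = P' x * K (Fin.last m) (x (Fin.last m)) s := by
      intro x s
      rw [hP, ib_snoc_zero, ib_snoc_prod, mul_assoc]
    have hB : ∀ (j : Fin (m+1)) (y : S), q j.castSucc y = q' j y := by
      intro j y
      rw [hq, ib_sum_snoc]
      refine Finset.sum_congr rfl fun x _ => ?_
      have hc : ∀ s : S, (Fin.snoc x s : Fin (m+2) → S) j.castSucc = x j :=
        fun s => by simp
      by_cases h : x j = y
      · simp only [hc, h, if_true, hA, ← Finset.mul_sum, hKs, mul_one]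
      · simp only [hc, h, if_false, Finset.sum_const_zero]
    have hPsum : ∑ x : Fin (m+2) → S, P x = 1 := by
      rw [Finset.sum_congr rfl fun x _ => hP x]
      exact ib_chain_sum (m+1) p1 hp1s K hKs
    have hqlast_nonneg : ∀ s, 0 ≤ q (Fin.last (m+1)) s := by
      intro s
      rw [hq]
      refine Finset.sum_nonneg fun x _ => ?_
      split
      · rw [hP]; exact mul_nonneg (hp1n _) (Finset.prod_nonneg fun j _ => hKn _ _ _)
      · exact le_refl 0
    have hqlast_sum : ∑ s, q (Fin.last (m+1)) s = 1 := by
      simp_rw [hq]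
      rw [Finset.sum_comm]
      calc ∑ x : Fin (m+2) → S, ∑ s : S, (if x (Fin.last (m+1)) = s then P x else 0)
          = ∑ x : Fin (m+2) → S, P x := by
            refine Finset.sum_congr rfl fun x _ => ?_
            exact Finset.sum_ite_eq (Finset.univ) (x (Fin.last (m+1))) (fun _ => P x) |>.trans (by simp)
        _ = 1 := hPsum
    have hP'sum : ∑ x : Fin (m+1) → S, P' x = 1 :=
      ib_chain_sum m p1 hp1s K' (fun j s => hKs j.castSucc s)
    have hclose' : ∀ j : Fin m, ∀ s : S, ∑ y, |K' j s y - q' j.succ y| ≤ β := by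
      intro j s
      have h1 := hclose j.castSucc s
      have h2 : ∀ y, q j.castSucc.succ y = q' j.succ y := by
        intro y
        rw [Fin.succ_castSucc]
        exact hB j.succ y
      simpa only [h2] using h1
    have ihA := ih p1 hp1n hp1s K' (fun j s y => hKn j.castSucc s y)
      (fun j s => hKs j.castSucc s) P' (fun _ => rfl) q' (fun _ _ => rfl) hclose'
    have hprodq : ∀ (x : Fin (m+1) → S) (s : S),
        (∏ j : Fin (m+2), q j ((Fin.snoc x s : Fin (m+2) → S) j))
        = (∏ j : Fin (m+1), q' j (x j)) * q (Fin.last (m+1)) s := by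
      intro x s
      rw [Fin.prod_univ_castSucc, Fin.snoc_last]
      congr 1
      refine Finset.prod_congr rfl fun j _ => ?_
      rw [Fin.snoc_castSucc, hB]
    calc ∑ x : Fin (m+2) → S, |P x - ∏ j, q j (x j)|
        = ∑ x : Fin (m+1) → S, ∑ s : S,
            |P' x * K (Fin.last m) (x (Fin.last m)) s -
              (∏ j : Fin (m+1), q' j (x j)) * q (Fin.last (m+1)) s| := by
          rw [ib_sum_snoc]
          refine Finset.sum_congr rfl fun x _ => Finset.sum_congr rfl fun s _ => ?_
          rw [hA, hprodq]
      _ ≤ ∑ x : Fin (m+1) → S, ∑ s : S,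
            (P' x * |K (Fin.last m) (x (Fin.last m)) s - q (Fin.last (m+1)) s| +
             |P' x - ∏ j : Fin (m+1), q' j (x j)| * q (Fin.last (m+1)) s) := by
          refine Finset.sum_le_sum fun x _ => Finset.sum_le_sum fun s _ => ?_
          have hsplit : P' x * K (Fin.last m) (x (Fin.last m)) s -
              (∏ j : Fin (m+1), q' j (x j)) * q (Fin.last (m+1)) s
              = P' x * (K (Fin.last m) (x (Fin.last m)) s - q (Fin.last (m+1)) s) +
                (P' x - ∏ j : Fin (m+1), q' j (x j)) * q (Fin.last (m+1)) s := by ring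
          rw [hsplit]
          calc |_| ≤ |P' x * (K (Fin.last m) (x (Fin.last m)) s - q (Fin.last (m+1)) s)| +
                |(P' x - ∏ j : Fin (m+1), q' j (x j)) * q (Fin.last (m+1)) s| := abs_add_le _ _
            _ = P' x * |K (Fin.last m) (x (Fin.last m)) s - q (Fin.last (m+1)) s| +
                |P' x - ∏ j : Fin (m+1), q' j (x j)| * q (Fin.last (m+1)) s := by
                rw [abs_mul, abs_of_nonneg (hP'nonneg x), abs_mul, abs_of_nonneg (hqlast_nonneg s)]
      _ = ∑ x : Fin (m+1) → S, (P' x * ∑ s, |K (Fin.last m) (x (Fin.last m)) s - q (Fin.last (m+1)) s|) +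
          ∑ x : Fin (m+1) → S, (|P' x - ∏ j : Fin (m+1), q' j (x j)| * ∑ s, q (Fin.last (m+1)) s) := by
          rw [← Finset.sum_add_distrib]
          refine Finset.sum_congr rfl fun x _ => ?_
          rw [Finset.sum_add_distrib, Finset.mul_sum, Finset.mul_sum]
      _ ≤ ∑ x : Fin (m+1) → S, P' x * β +
          ∑ x : Fin (m+1) → S, |P' x - ∏ j : Fin (m+1), q' j (x j)| * 1 := by
          refine add_le_add (Finset.sum_le_sum fun x _ => ?_) (Finset.sum_le_sum fun x _ => ?_)
          · refine mul_le_mul_of_nonneg_left ?_ (hP'nonneg x)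
            have := hclose (Fin.last m) (x (Fin.last m))
            rwa [Fin.succ_last] at this
          · rw [hqlast_sum]
      _ = β + ∑ x : Fin (m+1) → S, |P' x - ∏ j : Fin (m+1), q' j (x j)| := by
          rw [← Finset.sum_mul, hP'sum, one_mul]
          simp [mul_one]
      _ ≤ β + m * β := by linarith [ihA]
      _ = (m+1 : ℕ) * β := by push_cast; ring

/-- Independent blocks (Yu, 1994): a Markov-structured joint distribution over `m + 1`
coordinates whose conditional kernels are uniformly within `β` (in `ℓ₁`) of the
corresponding marginals differs from the product of its marginals by at most `m β` in
`ℓ₁`. Here the number of coordinates is `n = m + 1`, so the bound is `(n - 1) β`. -/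
theorem independent_blocks_bound {S : Type*} [Fintype S] [DecidableEq S] [Nonempty S]
    (m : ℕ)
    (p1 : S → ℝ) (hp1_nonneg : ∀ s, 0 ≤ p1 s) (hp1_sum : ∑ s, p1 s = 1)
    (K : Fin m → S → S → ℝ)
    (hK_nonneg : ∀ j s y, 0 ≤ K j s y) (hK_sum : ∀ j s, ∑ y, K j s y = 1)
    (P : (Fin (m + 1) → S) → ℝ)
    (hP : ∀ x : Fin (m + 1) → S, P x = p1 (x 0) * ∏ j : Fin m, K j (x j.castSucc) (x j.succ))
    (q : Fin (m + 1) → S → ℝ)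
    (hq : ∀ j y, q j y = ∑ x : Fin (m + 1) → S, if x j = y then P x else 0)
    (β : ℝ) (hβ : 0 ≤ β)
    (hclose : ∀ j : Fin m, ∀ s : S, ∑ y, |K j s y - q j.succ y| ≤ β) :
    ∑ x : Fin (m + 1) → S, |P x - ∏ j, q j (x j)| ≤ m * β :=
  ib_main β hβ m p1 hp1_nonneg hp1_sum K hK_nonneg hK_sum P hP q hq hclose
end
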